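/- Let V be a vector space over a field of characteristic zero with basis indexed by an m × n rectangle and e1, e2 the shift operators as above. Then the centralizer of {e1, e2} in End(V) has dimension mn, with basis {e1^a e2^b : 0 ≤ a < m, 0 ≤ b < n}. -/

import Mathlib

theorem stmt11 {K V : Type*} [Field K] [CharZero K] [AddCommGroup V] [Module K V]
    (m n : ℕ) (hm : 0 < m) (hn : 0 < n)
    (b : Module.Basis (Fin m × Fin n) K V)
    (e1 e2 : Module.End K V)
    (he1 : ∀ p : Fin m × Fin n, e1 (b p) =
      if h : (p.1 : ℕ) + 1 < m then b (⟨(p.1 : ℕ) + 1, h⟩, p.2) else 0)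
    (he2 : ∀ p : Fin m × Fin n, e2 (b p) =
      if h : (p.2 : ℕ) + 1 < n then b (p.1, ⟨(p.2 : ℕ) + 1, h⟩) else 0) :
    LinearIndependent K (fun p : Fin m × Fin n => e1 ^ (p.1 : ℕ) * e2 ^ (p.2 : ℕ)) ∧
    {x : Module.End K V | Commute x e1 ∧ Commute x e2} =
      ↑(Submodule.span K
        (Set.range (fun p : Fin m × Fin n => e1 ^ (p.1 : ℕ) * e2 ^ (p.2 : ℕ)))) ∧
    Module.finrank K
      ↥(Submodule.span K
        (Set.range (fun p : Fin m × Fin n => e1 ^ (p.1 : ℕ) * e2 ^ (p.2 : ℕ)))) = m * n := by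
  classical
  -- action of powers of e1
  have e1pow : ∀ (a : ℕ) (k : Fin m) (l : Fin n),
      (e1 ^ a) (b (k, l)) = if h : (k : ℕ) + a < m then b (⟨(k : ℕ) + a, h⟩, l) else 0 := by
    intro a
    induction a with
    | zero => intro k l; simp
    | succ a ih =>
      intro k l
      rw [pow_succ', Module.End.mul_apply]
      rw [show ((e1 ^ a) (b (k, l))) = _ from ih k l]
      by_cases h : (k : ℕ) + a < m
      · rw [dif_pos h, he1 (⟨(k : ℕ) + a, h⟩, l)]
        by_cases h2 : (k : ℕ) + a + 1 < m
        · rw [dif_pos h2, dif_pos (show (k : ℕ) + (a + 1) < m by omega)]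
          congr 2
        · rw [dif_neg h2, dif_neg (by omega)]
      · rw [dif_neg h, map_zero, dif_neg (by omega)]
  have e2pow : ∀ (a : ℕ) (k : Fin m) (l : Fin n),
      (e2 ^ a) (b (k, l)) = if h : (l : ℕ) + a < n then b (k, ⟨(l : ℕ) + a, h⟩) else 0 := by
    intro a
    induction a with
    | zero => intro k l; simp
    | succ a ih =>
      intro k l
      rw [pow_succ', Module.End.mul_apply]
      rw [show ((e2 ^ a) (b (k, l))) = _ from ih k l]
      by_cases h : (l : ℕ) + a < n
      · rw [dif_pos h, he2 (k, ⟨(l : ℕ) + a, h⟩)]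
        by_cases h2 : (l : ℕ) + a + 1 < n
        · rw [dif_pos h2, dif_pos (show (l : ℕ) + (a + 1) < n by omega)]
          congr 2
        · rw [dif_neg h2, dif_neg (by omega)]
      · rw [dif_neg h, map_zero, dif_neg (by omega)]
  -- action of monomials
  have mon : ∀ (a c : ℕ) (k : Fin m) (l : Fin n),
      (e1 ^ a * e2 ^ c) (b (k, l)) =
        if h : (k : ℕ) + a < m ∧ (l : ℕ) + c < n
        then b (⟨(k : ℕ) + a, h.1⟩, ⟨(l : ℕ) + c, h.2⟩) else 0 := by
    intro a c k l
    rw [Module.End.mul_apply, e2pow]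
    by_cases h : (l : ℕ) + c < n
    · rw [dif_pos h, e1pow]
      by_cases h2 : (k : ℕ) + a < m
      · rw [dif_pos h2, dif_pos ⟨h2, h⟩]
      · rw [dif_neg h2, dif_neg (by tauto)]
    · rw [dif_neg h, map_zero, dif_neg (by tauto)]
  set v0 : V := b (⟨0, hm⟩, ⟨0, hn⟩) with hv0
  have key : ∀ q : Fin m × Fin n, (e1 ^ (q.1 : ℕ) * e2 ^ (q.2 : ℕ)) v0 = b q := by
    intro q
    rw [hv0, mon]
    rw [dif_pos (show ((⟨0, hm⟩ : Fin m) : ℕ) + q.1 < m ∧ ((⟨0, hn⟩ : Fin n) : ℕ) + q.2 < n by simp)]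
    congr 1
    exact Prod.ext (Fin.ext (by simp)) (Fin.ext (by simp))
  have li : LinearIndependent K (fun p : Fin m × Fin n => e1 ^ (p.1 : ℕ) * e2 ^ (p.2 : ℕ)) := by
    rw [Fintype.linearIndependent_iff]
    intro g hg
    have h0 : (∑ q : Fin m × Fin n, g q • (e1 ^ (q.1 : ℕ) * e2 ^ (q.2 : ℕ))) v0 = 0 := by
      rw [hg]; rfl
    rw [LinearMap.sum_apply] at h0
    simp only [LinearMap.smul_apply, key] at h0
    exact Fintype.linearIndependent_iff.mp b.linearIndependent g h0
  have hce : Commute e1 e2 := by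
    apply b.ext
    rintro ⟨k, l⟩
    show (e1 * e2) (b (k, l)) = (e2 * e1) (b (k, l))
    rw [Module.End.mul_apply, Module.End.mul_apply, he1 (k, l), he2 (k, l)]
    by_cases h1 : (k : ℕ) + 1 < m <;> by_cases h2 : (l : ℕ) + 1 < n <;>
      simp [h1, h2, he1, he2]
  refine ⟨li, ?_, ?_⟩
  · ext x
    simp only [Set.mem_setOf_eq, SetLike.mem_coe]
    constructor
    · rintro ⟨h1, h2⟩
      have hx : x = ∑ p : Fin m × Fin n,
          b.repr (x v0) p • (e1 ^ (p.1 : ℕ) * e2 ^ (p.2 : ℕ)) := by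
        apply b.ext
        rintro ⟨k, l⟩
        have hb : b (k, l) = (e1 ^ (k : ℕ) * e2 ^ (l : ℕ)) v0 := (key (k, l)).symm
        have hc : Commute x (e1 ^ (k : ℕ) * e2 ^ (l : ℕ)) :=
          (h1.pow_right _).mul_right (h2.pow_right _)
        rw [hb, ← Module.End.mul_apply, hc.eq, Module.End.mul_apply]
        conv_lhs => rw [← b.linearCombination_repr (x v0)]
        rw [Finsupp.linearCombination_apply, Finsupp.sum_fintype _ _ (by simp)]
        rw [map_sum, LinearMap.sum_apply]
        refine Finset.sum_congr rfl fun p _ => ?_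
        rw [map_smul, LinearMap.smul_apply]
        congr 1
        rw [show b p = b (p.1, p.2) from rfl, mon, ← hb, mon]
        by_cases hA : (p.1 : ℕ) + (k : ℕ) < m ∧ (p.2 : ℕ) + (l : ℕ) < n
        · rw [dif_pos hA, dif_pos ⟨by omega, by omega⟩]
          exact congrArg b (Prod.ext (Fin.ext (by simp [Nat.add_comm])) (Fin.ext (by simp [Nat.add_comm])))
        · rw [dif_neg hA, dif_neg (by omega)]
      rw [hx]
      exact Submodule.sum_mem _ fun p _ =>
        Submodule.smul_mem _ _ (Submodule.subset_span ⟨p, rfl⟩)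
    · intro hx
      have hgen : ∀ y ∈ Set.range (fun p : Fin m × Fin n => e1 ^ (p.1 : ℕ) * e2 ^ (p.2 : ℕ)),
          Commute y e1 ∧ Commute y e2 := by
        rintro y ⟨p, rfl⟩
        exact ⟨(Commute.refl e1).pow_left _ |>.mul_left ((hce.symm.pow_left _)),
          ((hce.pow_left _).mul_left ((Commute.refl e2).pow_left _))⟩
      refine Submodule.span_induction (p := fun y _ => Commute y e1 ∧ Commute y e2)
        (fun y hy => hgen y hy) ⟨Commute.zero_left _, Commute.zero_left _⟩
        (fun y z _ _ hy hz => ⟨hy.1.add_left hz.1, hy.2.add_left hz.2⟩)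
        (fun c y _ hy => ⟨hy.1.smul_left c, hy.2.smul_left c⟩) hx
  · rw [finrank_span_eq_card li]
    simp [Fintype.card_prod]
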